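/- Let V be a finite-dimensional complex vector space of dimension at least 3, and let q be a nondegenerate quadratic form on V. Then the special orthogonal group of q acts transitively on nonzero isotropic vectors: for any nonzero vectors v, w ∈ V with q(v) = 0 and q(w) = 0, there exists a linear automorphism g of V preserving q (i.e. q(g x) = q(x) for all x ∈ V) with determinant 1 such that g v = w. -/

import Mathlib

open QuadraticMap Module

set_option linter.unusedSectionVars false

section SOwitt

variable {V : Type*} [AddCommGroup V] [Module ℂ V] [FiniteDimensional ℂ V]

private lemma det_id_sub_smulRight (f : V →ₗ[ℂ] ℂ) (x : V) :
    LinearMap.det (LinearMap.id - f.smulRight x) = 1 - f x := by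
  classical
  let b := Module.finBasis ℂ V
  rw [← LinearMap.det_toMatrix b, _root_.map_sub, LinearMap.toMatrix_id]
  have h1 : LinearMap.toMatrix b b (f.smulRight x) =
      Matrix.replicateCol (Fin 1) (fun i => b.repr x i) * Matrix.replicateRow (Fin 1) (fun j => f (b j)) := by
    ext i j
    simp [LinearMap.toMatrix_apply, Matrix.mul_apply, Matrix.replicateCol, Matrix.replicateRow, mul_comm]
  rw [h1, Matrix.det_one_sub_mul_comm]
  have h2 : (Matrix.replicateRow (Fin 1) (fun j => f (b j)) * Matrix.replicateCol (Fin 1) (fun i => b.repr x i)) =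
      Matrix.of (fun _ _ : Fin 1 => f x) := by
    ext i j
    simp [Matrix.mul_apply, Matrix.replicateRow, Matrix.replicateCol]
    conv_rhs => rw [← b.sum_repr x]
    rw [map_sum]
    simp [mul_comm]
  rw [h2]
  simp [Matrix.det_fin_one]

private lemma q_sub_expand (q : QuadraticForm ℂ V) (a b : V) :
    q (a - b) = q a + q b - polar (⇑q) a b := by
  have h : polar (⇑q) a (-b) = q (a + -b) - q a - q (-b) := rfl
  rw [← sub_eq_add_neg, polar_neg_right, QuadraticMap.map_neg] at h
  linear_combination -h

private lemma q_add_expand (q : QuadraticForm ℂ V) (a b : V) :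
    q (a + b) = q a + q b + polar (⇑q) a b := by
  have h : polar (⇑q) a b = q (a + b) - q a - q b := rfl
  linear_combination -h

private lemma polar_self' (q : QuadraticForm ℂ V) (a : V) : polar (⇑q) a a = 2 * q a := by
  rw [polar_self]; push_cast [nsmul_eq_mul]; ring

private noncomputable def qreflForm (q : QuadraticForm ℂ V) (u : V) : V →ₗ[ℂ] ℂ :=
  (q u)⁻¹ • (polarBilin q u)

private lemma qreflForm_apply (q : QuadraticForm ℂ V) (u y : V) :
    qreflForm q u y = (q u)⁻¹ * polar (⇑q) u y := by
  simp [qreflForm, polarBilin]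

private lemma qreflForm_self (q : QuadraticForm ℂ V) (u : V) (hu : q u ≠ 0) :
    qreflForm q u u = 2 := by
  rw [qreflForm_apply, polar_self' q u]
  field_simp

private noncomputable def qrefl (q : QuadraticForm ℂ V) (u : V) (hu : q u ≠ 0) : V ≃ₗ[ℂ] V :=
  Module.reflection (qreflForm_self q u hu)

private lemma qrefl_apply (q : QuadraticForm ℂ V) (u : V) (hu : q u ≠ 0) (y : V) :
    qrefl q u hu y = y - ((q u)⁻¹ * polar (⇑q) u y) • u := by
  rw [qrefl, Module.reflection_apply, qreflForm_apply]

private lemma qrefl_det (q : QuadraticForm ℂ V) (u : V) (hu : q u ≠ 0) :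
    LinearMap.det ((qrefl q u hu : V ≃ₗ[ℂ] V) : V →ₗ[ℂ] V) = -1 := by
  have h : ((qrefl q u hu : V ≃ₗ[ℂ] V) : V →ₗ[ℂ] V) =
      LinearMap.id - (qreflForm q u).smulRight u := rfl
  rw [h, det_id_sub_smulRight, qreflForm_self q u hu]
  norm_num

private lemma qrefl_isometry (q : QuadraticForm ℂ V) (u : V) (hu : q u ≠ 0) (y : V) :
    q (qrefl q u hu y) = q y := by
  rw [qrefl_apply, q_sub_expand, QuadraticMap.map_smul, polar_smul_right,
    polar_comm (⇑q) y u]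
  have h2 := polar_self' q u
  field_simp
  have h3 : q u * (q u)⁻¹ = 1 := mul_inv_cancel₀ hu
  linear_combination (polar (⇑q) u y ^ 2 * (q u)⁻¹) * h3

private lemma exists_partner (q : QuadraticForm ℂ V)
    (hq : ∀ x : V, (∀ y : V, QuadraticMap.polar (⇑q) x y = 0) → x = 0)
    (v : V) (hv : v ≠ 0) (hqv : q v = 0) :
    ∃ a : V, q a = 0 ∧ polar (⇑q) v a = 1 := by
  have h0 : ∃ a₀, polar (⇑q) v a₀ ≠ 0 := by
    by_contra h
    push_neg at h
    exact hv (hq v h)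
  obtain ⟨a₀, ha₀⟩ := h0
  obtain ⟨a₁, h1⟩ : ∃ a₁ : V, polar (⇑q) v a₁ = 1 :=
    ⟨(polar (⇑q) v a₀)⁻¹ • a₀, by
      rw [polar_smul_right, smul_eq_mul, inv_mul_cancel₀ ha₀]⟩
  refine ⟨a₁ - (q a₁) • v, ?_, ?_⟩
  · rw [q_sub_expand, QuadraticMap.map_smul, polar_smul_right, polar_comm (⇑q) a₁ v, h1]
    simp [hqv]
  · rw [polar_sub_right, polar_smul_right, h1, polar_self' q v, hqv]
    simp

private lemma exists_orth (hdim : 3 ≤ Module.finrank ℂ V) (q : QuadraticForm ℂ V)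
    (hq : ∀ x : V, (∀ y : V, QuadraticMap.polar (⇑q) x y = 0) → x = 0)
    (w : V) (hw : w ≠ 0) (hqw : q w = 0) :
    ∃ c : V, polar (⇑q) w c = 0 ∧ q c ≠ 0 := by
  obtain ⟨b, hb0, hwb⟩ := exists_partner q hq w hw hqw
  have hspan : Submodule.span ℂ {w, b} ≠ ⊤ := by
    intro h
    have h1 : Module.finrank ℂ (Submodule.span ℂ ({w, b} : Set V)) ≤ 2 := by
      classical
      refine (finrank_span_le_card ({w, b} : Set V)).trans ?_
      simp [Set.toFinset_insert]
      exact Finset.card_insert_le _ _ |>.trans (by simp)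
    rw [h, finrank_top] at h1
    omega
  obtain ⟨x₀, hx₀⟩ : ∃ x₀ : V, x₀ ∉ Submodule.span ℂ {w, b} := by
    by_contra h
    push_neg at h
    exact hspan (Submodule.eq_top_iff'.mpr h)
  set P : V → V := fun x => x - polar (⇑q) x b • w - polar (⇑q) x w • b with hP
  set u : V := P x₀ with hu
  have hune : u ≠ 0 := by
    intro h
    apply hx₀
    have : x₀ = polar (⇑q) x₀ b • w + polar (⇑q) x₀ w • b := by
      have := h
      rw [hu, hP] at this
      simp only at this
      linear_combination (norm := module) this
    rw [this]
    exact Submodule.add_mem _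
      (Submodule.smul_mem _ _ (Submodule.subset_span (by simp)))
      (Submodule.smul_mem _ _ (Submodule.subset_span (by simp)))
  have hwP : ∀ x : V, polar (⇑q) w (P x) = 0 := by
    intro x
    rw [hP]
    simp only
    rw [polar_sub_right, polar_sub_right, polar_smul_right, polar_smul_right,
      polar_self' q w, hqw, hwb, polar_comm (⇑q) w x]
    simp
  have hbP : ∀ x : V, polar (⇑q) b (P x) = 0 := by
    intro x
    rw [hP]
    simp only
    rw [polar_sub_right, polar_sub_right, polar_smul_right, polar_smul_right,
      polar_self' q b, hb0, polar_comm (⇑q) b w, hwb, polar_comm (⇑q) b x]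
    simp
  by_contra h
  push_neg at h
  apply hune
  apply hq
  intro y
  have key : polar (⇑q) u (P y) = 0 := by
    have h1 : q u = 0 := h u (hwP x₀)
    have h2 : q (P y) = 0 := h (P y) (hwP y)
    have h3 : q (u + P y) = 0 := by
      apply h
      rw [polar_add_right, hwP x₀, hwP y, add_zero]
    have h4 : polar (⇑q) u (P y) = q (u + P y) - q u - q (P y) := rfl
    rw [h4, h1, h2, h3]
    ring
  have hy : y = polar (⇑q) y b • w + polar (⇑q) y w • b + P y := by
    rw [hP]; simp only; abel
  calc polar (⇑q) u y
      = polar (⇑q) u (polar (⇑q) y b • w + polar (⇑q) y w • b + P y) := by rw [← hy]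
    _ = 0 := by
        rw [polar_add_right, polar_add_right, polar_smul_right, polar_smul_right,
          polar_comm (⇑q) u w, hwP x₀, polar_comm (⇑q) u b, hbP x₀, key]
        simp

private lemma so_step (hdim : 3 ≤ Module.finrank ℂ V) (q : QuadraticForm ℂ V)
    (hq : ∀ x : V, (∀ y : V, QuadraticMap.polar (⇑q) x y = 0) → x = 0)
    (v w : V) (hw : w ≠ 0) (hqv : q v = 0) (hqw : q w = 0)
    (hvw : polar (⇑q) v w ≠ 0) :
    ∃ g : V ≃ₗ[ℂ] V, (∀ x : V, q (g x) = q x) ∧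
      LinearMap.det (g : V →ₗ[ℂ] V) = 1 ∧ g v = w := by
  have hu : q (v - w) ≠ 0 := by
    rw [q_sub_expand, hqv, hqw]
    simpa using hvw
  obtain ⟨c, hc1, hc2⟩ := exists_orth hdim q hq w hw hqw
  refine ⟨(qrefl q (v - w) hu).trans (qrefl q c hc2), ?_, ?_, ?_⟩
  · intro x
    rw [LinearEquiv.trans_apply, qrefl_isometry, qrefl_isometry]
  · rw [LinearEquiv.coe_trans, LinearMap.det_comp, qrefl_det, qrefl_det]
    norm_num
  · rw [LinearEquiv.trans_apply]
    have h1 : qrefl q (v - w) hu v = w := by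
      rw [qrefl_apply]
      have h2 : polar (⇑q) (v - w) v = q (v - w) := by
        rw [polar_sub_left, polar_self' q v, hqv, q_sub_expand, hqv, hqw,
          polar_comm (⇑q) w v]
        ring
      rw [h2, inv_mul_cancel₀ hu, one_smul]
      abel
    rw [h1, qrefl_apply, polar_comm (⇑q) c w, hc1]
    simp

end SOwitt

/-- The special orthogonal group of a nondegenerate quadratic form `q` on a finite-dimensional
complex vector space of dimension at least `3` acts transitively on nonzero isotropic vectors. -/
theorem so_transitive_on_isotropic_vectors {V : Type*} [AddCommGroup V] [Module ℂ V]
    [FiniteDimensional ℂ V] (hdim : 3 ≤ Module.finrank ℂ V)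
    (q : QuadraticForm ℂ V)
    (hq : ∀ x : V, (∀ y : V, QuadraticMap.polar (⇑q) x y = 0) → x = 0)
    (v w : V) (hv : v ≠ 0) (hw : w ≠ 0) (hqv : q v = 0) (hqw : q w = 0) :
    ∃ g : V ≃ₗ[ℂ] V, (∀ x : V, q (g x) = q x) ∧
      LinearMap.det (g : V →ₗ[ℂ] V) = 1 ∧ g v = w := by
  by_cases hvw : polar (⇑q) v w ≠ 0
  · exact so_step hdim q hq v w hw hqv hqw hvw
  push_neg at hvw
  obtain ⟨a, ha0, hva⟩ := exists_partner q hq v hv hqv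
  obtain ⟨b, hb0, hwb⟩ := exists_partner q hq w hw hqw
  have hz : ∃ z : V, q z = 0 ∧ polar (⇑q) v z ≠ 0 ∧ polar (⇑q) w z ≠ 0 := by
    by_cases h1 : polar (⇑q) w a ≠ 0
    · exact ⟨a, ha0, by rw [hva]; exact one_ne_zero, h1⟩
    push_neg at h1
    by_cases h2 : polar (⇑q) v b ≠ 0
    · exact ⟨b, hb0, h2, by rw [hwb]; exact one_ne_zero⟩
    push_neg at h2
    refine ⟨a + b + (-polar (⇑q) a b) • w, ?_, ?_, ?_⟩
    · rw [q_add_expand, q_add_expand, QuadraticMap.map_smul, polar_smul_right,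
        polar_add_left, polar_comm (⇑q) a w, h1, polar_comm (⇑q) b w, hwb,
        ha0, hb0, hqw]
      simp only [smul_eq_mul]
      ring
    · rw [polar_add_right, polar_add_right, polar_smul_right, hva, h2, hvw]
      simp
    · rw [polar_add_right, polar_add_right, polar_smul_right, h1, hwb,
        polar_self' q w, hqw]
      simp
  obtain ⟨z, hz0, hvz, hwz⟩ := hz
  have hzne : z ≠ 0 := by
    intro h
    rw [h, polar_zero_right] at hvz
    exact hvz rfl
  obtain ⟨g₁, hg₁q, hg₁det, hg₁v⟩ := so_step hdim q hq v z hzne hqv hz0 hvz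
  obtain ⟨g₂, hg₂q, hg₂det, hg₂z⟩ := so_step hdim q hq z w hw hz0 hqw
    (by rw [polar_comm]; exact hwz)
  refine ⟨g₁.trans g₂, ?_, ?_, ?_⟩
  · intro x
    rw [LinearEquiv.trans_apply, hg₂q, hg₁q]
  · rw [LinearEquiv.coe_trans, LinearMap.det_comp, hg₁det, hg₂det, one_mul]
  · rw [LinearEquiv.trans_apply, hg₁v, hg₂z]
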